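/- Let A be an m×n real matrix possessing a nonsingular r×r submatrix A₁₁, and let ε > 0. If ‖A₁₁⁻¹‖_C ≤ 1/(max(m,n)·ε), then σ_r(A) ≥ ε. -/

import Mathlib

open Matrix
open scoped RealInnerProductSpace

/-- The maximum absolute entry norm `‖·‖_C` of a matrix. -/
noncomputable def cnorm {m n : Type*} [Fintype m] [Fintype n]
    (M : Matrix m n ℝ) : ℝ := ⨆ i, ⨆ j, |M i j|

/-- The `k`-th largest value (1-indexed) of a finite family of reals. -/
noncomputable def kthLargest {ι : Type*} [Fintype ι] (f : ι → ℝ) (k : ℕ) : ℝ :=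
  ((Finset.univ.val.map f).sort (· ≤ ·)).getD (Fintype.card ι - k) 0

/-- The `k`-th largest singular value (1-indexed) of a real matrix,
i.e. the square root of the `k`-th largest eigenvalue of `Aᴴ * A`. -/
noncomputable def singularValue {m n : Type*} [Fintype m] [Fintype n] [DecidableEq n]
    (A : Matrix m n ℝ) (k : ℕ) : ℝ :=
  Real.sqrt (kthLargest (show (Aᵀ * A).IsHermitian by
    simpa [Matrix.conjTranspose_eq_transpose_of_trivial] using
      Matrix.isHermitian_conjTranspose_mul_self A).eigenvalues k)

lemma kthLargest_ge {ι : Type*} [Fintype ι] (f : ι → ℝ) (k : ℕ) (c : ℝ)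
    (hk : 0 < k) (hcard : k ≤ (Finset.univ.filter (fun i => c ≤ f i)).card) :
    c ≤ kthLargest f k := by
  classical
  set L := ((Finset.univ.val.map f).sort (· ≤ ·)) with hL
  have hlen : L.length = Fintype.card ι := by
    rw [hL, Multiset.length_sort, Multiset.card_map]; rfl
  have hkn : k ≤ Fintype.card ι := hcard.trans ((Finset.card_filter_le _ _).trans_eq Finset.card_univ)
  set idx := Fintype.card ι - k with hidx
  have hidxlt : idx < L.length := by omega
  have hsorted : L.Pairwise (· ≤ ·) := Multiset.pairwise_sort _ _
  rw [kthLargest, List.getD_eq_getElem _ _ hidxlt]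
  by_contra h'
  push_neg at h'
  set p : ℝ → Bool := fun x => decide (c ≤ x) with hp
  have hcount : L.countP p = (Finset.univ.filter (fun i => c ≤ f i)).card := by
    have h1 : L.countP p = Multiset.countP (fun x => c ≤ x) (↑L) := by
      rw [Multiset.coe_countP]
    rw [h1, hL, Multiset.sort_eq, Multiset.countP_map]
    simp [Finset.card_filter, Multiset.countP_eq_card_filter, Finset.card_def, Finset.filter_val]
  have htake : (L.take (idx + 1)).countP p = 0 := by
    rw [List.countP_eq_zero]
    intro x hx
    rw [List.mem_iff_getElem] at hx
    obtain ⟨j, hj, rfl⟩ := hx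
    have hj' : j < L.length := lt_of_lt_of_le hj (by rw [List.length_take]; omega)
    rw [List.getElem_take]
    have hjidx : j ≤ idx := by
      have := List.length_take (i := idx+1) (l := L)
      omega
    have hle : L[j] ≤ L[idx] := by
      have := hsorted.rel_get_of_le (a := ⟨j, hj'⟩) (b := ⟨idx, hidxlt⟩) hjidx
      simpa using this
    simp [p]
    linarith
  have hdrop : (L.drop (idx + 1)).countP p ≤ k - 1 := by
    have := List.countP_le_length (p := p) (l := L.drop (idx+1))
    rw [List.length_drop] at this
    omega
  have : L.countP p ≤ k - 1 := by
    conv_lhs => rw [← List.take_append_drop (idx+1) L]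
    rw [List.countP_append]
    omega
  omega

lemma toEuclideanLin_eigBasis {n : ℕ} {M : Matrix (Fin n) (Fin n) ℝ} (hM : M.IsHermitian)
    (i : Fin n) :
    Matrix.toEuclideanLin M (hM.eigenvectorBasis i) =
      hM.eigenvalues i • hM.eigenvectorBasis i := by
  have h := hM.mulVec_eigenvectorBasis i
  apply (WithLp.equiv 2 (Fin n → ℝ)).injective
  simpa [Matrix.toEuclideanLin_apply] using h

lemma card_eig_ge {n : ℕ} {M : Matrix (Fin n) (Fin n) ℝ} (hM : M.IsHermitian)
    (c : ℝ) (V : Submodule ℝ (EuclideanSpace ℝ (Fin n))) {r : ℕ}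
    (hV : r ≤ Module.finrank ℝ V)
    (hq : ∀ x ∈ V, c * ‖x‖ ^ 2 ≤ ⟪x, Matrix.toEuclideanLin M x⟫) :
    r ≤ (Finset.univ.filter (fun i => c ≤ hM.eigenvalues i)).card := by
  classical
  by_contra hcon
  push_neg at hcon
  set b := hM.eigenvectorBasis with hb
  set T : Finset (Fin n) := Finset.univ.filter (fun i => hM.eigenvalues i < c) with hT
  have hTc : T = (Finset.univ.filter (fun i => c ≤ hM.eigenvalues i))ᶜ := by
    ext i; simp [hT, not_le]
  have hcardT : (Finset.univ.filter (fun i => c ≤ hM.eigenvalues i)).card + T.card = n := by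
    rw [hTc, Finset.card_add_card_compl]
    simp
  set W : Submodule ℝ (EuclideanSpace ℝ (Fin n)) :=
    Submodule.span ℝ (Set.range (fun i : T => (b i : EuclideanSpace ℝ (Fin n)))) with hW
  have hbli : LinearIndependent ℝ (fun i : Fin n => b i) := b.orthonormal.linearIndependent
  have hWfin : Module.finrank ℝ W = T.card := by
    rw [hW]
    have hr : (Set.range fun i : T => (b i : EuclideanSpace ℝ (Fin n)))
        = Set.range ((fun i => b i) ∘ (Subtype.val : T → Fin n)) := rfl
    rw [hr, finrank_span_eq_card (hbli.comp _ Subtype.val_injective)]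
    simp [Fintype.card_coe]
  -- dimension count
  have htop : Module.finrank ℝ (EuclideanSpace ℝ (Fin n)) = n := finrank_euclideanSpace_fin
  have hsup : Module.finrank ℝ ↥(V ⊔ W) ≤ n := le_trans (Submodule.finrank_le _) (le_of_eq htop)
  have hsum := Submodule.finrank_sup_add_finrank_inf_eq V W
  have hposint : 0 < Module.finrank ℝ ↥(V ⊓ W) := by omega
  obtain ⟨x, hx0⟩ := Module.finrank_pos_iff_exists_ne_zero.mp hposint
  obtain ⟨y, hy⟩ := x
  have hy0 : y ≠ 0 := by
    intro h; apply hx0; exact Subtype.ext h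
  have hyV : y ∈ V := hy.1
  have hyW : y ∈ W := hy.2
  set g : Fin n → ℝ := fun i => b.repr y i with hg
  have hrepr0 : ∀ j ∉ T, g j = 0 := by
    intro j hj
    rw [hg]
    simp only
    rw [b.repr_apply_apply]
    refine Submodule.span_induction ?_ ?_ ?_ ?_ hyW
    · rintro _ ⟨i, rfl⟩
      exact b.orthonormal.2 (fun h => hj (h ▸ i.2))
    · exact inner_zero_right _
    · intro u v _ _ hu hv; rw [inner_add_right, hu, hv, add_zero]
    · intro a u _ hu; rw [real_inner_smul_right, hu, mul_zero]
  have hy_eq : y = ∑ i, g i • (b i : EuclideanSpace ℝ (Fin n)) := (b.sum_repr y).symm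
  have hf : Matrix.toEuclideanLin M y
      = ∑ i, (hM.eigenvalues i * g i) • (b i : EuclideanSpace ℝ (Fin n)) := by
    conv_lhs => rw [hy_eq]
    rw [map_sum]
    refine Finset.sum_congr rfl fun i _ => ?_
    rw [_root_.map_smul, toEuclideanLin_eigBasis hM i, smul_smul, mul_comm]
  have hinner : ⟪y, Matrix.toEuclideanLin M y⟫ = ∑ i, hM.eigenvalues i * g i ^ 2 := by
    rw [hf, inner_sum]
    refine Finset.sum_congr rfl fun i _ => ?_
    rw [real_inner_smul_right, real_inner_comm, ← b.repr_apply_apply]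
    ring
  have hnorm : ‖y‖ ^ 2 = ∑ i, g i ^ 2 := by
    have h1 : ‖y‖ ^ 2 = ⟪y, y⟫ := (real_inner_self_eq_norm_sq y).symm
    rw [h1]
    nth_rewrite 2 [hy_eq]
    rw [inner_sum]
    refine Finset.sum_congr rfl fun i _ => ?_
    rw [real_inner_smul_right, real_inner_comm, ← b.repr_apply_apply]
    ring
  -- find index with nonzero coefficient
  have hgne : ∃ i₀, g i₀ ≠ 0 := by
    by_contra hall
    push_neg at hall
    apply hy0
    rw [hy_eq]
    simp [hall]
  obtain ⟨i₀, hi₀⟩ := hgne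
  have hi₀T : i₀ ∈ T := by
    by_contra h; exact hi₀ (hrepr0 i₀ h)
  have hlt : ∑ i, hM.eigenvalues i * g i ^ 2 < ∑ i, c * g i ^ 2 := by
    refine Finset.sum_lt_sum ?_ ⟨i₀, Finset.mem_univ _, ?_⟩
    · intro i _
      by_cases hiT : i ∈ T
      · have : hM.eigenvalues i < c := by simpa [hT] using hiT
        nlinarith [sq_nonneg (g i)]
      · rw [hrepr0 i hiT]; simp
    · have hlam : hM.eigenvalues i₀ < c := by simpa [hT] using hi₀T
      have : 0 < g i₀ ^ 2 := by positivity
      nlinarith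
  have hq' := hq y hyV
  rw [hinner, hnorm, Finset.mul_sum] at hq'
  linarith

lemma abs_le_cnorm {m n : Type*} [Fintype m] [Fintype n] (M : Matrix m n ℝ)
    (i : m) (j : n) : |M i j| ≤ cnorm M := by
  have h1 : |M i j| ≤ ⨆ j', |M i j'| :=
    le_ciSup (f := fun j' => |M i j'|) (Set.Finite.bddAbove (Set.finite_range _)) j
  have h2 : (⨆ j', |M i j'|) ≤ ⨆ i', ⨆ j', |M i' j'| :=
    le_ciSup (f := fun i' => ⨆ j', |M i' j'|) (Set.Finite.bddAbove (Set.finite_range _)) i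
  exact h1.trans h2

/-- Let `A` be an `m × n` real matrix possessing a nonsingular `r × r` submatrix `A₁₁`, and
let `ε > 0`.  If `‖A₁₁⁻¹‖_C ≤ 1 / (max(m,n) ε)`, then `σ_r(A) ≥ ε`. -/
theorem sigma_r_ge_of_cnorm_inv_le {m n r : ℕ} (hr0 : 0 < r)
    (A : Matrix (Fin m) (Fin n) ℝ)
    (ri : Fin r → Fin m) (ci : Fin r → Fin n)
    (hri : Function.Injective ri) (hci : Function.Injective ci)
    (hA : IsUnit (A.submatrix ri ci).det) (ε : ℝ) (hε : 0 < ε)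
    (h : cnorm (A.submatrix ri ci)⁻¹ ≤ 1 / ((max m n : ℕ) * ε)) :
    singularValue A r ≥ ε := by
  classical
  have hrn : r ≤ n := by
    simpa using Fintype.card_le_of_injective ci hci
  have hn0 : 0 < n := lt_of_lt_of_le hr0 hrn
  have hmax : (n : ℝ) ≤ (max m n : ℕ) := by exact_mod_cast Nat.cast_le.mpr (le_max_right m n)
  have hmaxpos : (0:ℝ) < (max m n : ℕ) := by
    have : 0 < max m n := lt_of_lt_of_le hn0 (le_max_right m n)
    exact_mod_cast this
  set B := A.submatrix ri ci with hB
  set c₀ := cnorm B⁻¹ with hc₀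
  have hc₀0 : 0 ≤ c₀ := le_trans (abs_nonneg _) (abs_le_cnorm B⁻¹ ⟨0, hr0⟩ ⟨0, hr0⟩)
  have hrc : (r : ℝ) * c₀ ≤ 1 / ε := by
    have hrmax : (r:ℝ) ≤ (max m n : ℕ) := by
      exact_mod_cast le_trans hrn (le_max_right m n)
    calc (r : ℝ) * c₀ ≤ (max m n : ℕ) * (1 / ((max m n : ℕ) * ε)) := by
          apply mul_le_mul hrmax h hc₀0 hmaxpos.le
      _ = 1 / ε := by field_simp
  -- the subspace V
  set e : Fin r → EuclideanSpace ℝ (Fin n) :=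
    fun l => EuclideanSpace.single (ci l) (1:ℝ) with he
  set V : Submodule ℝ (EuclideanSpace ℝ (Fin n)) := Submodule.span ℝ (Set.range e) with hV
  have heind : LinearIndependent ℝ e := by
    have h1 : e = (fun i => (EuclideanSpace.basisFun (Fin n) ℝ) i) ∘ ci := by
      funext l; simp [he, EuclideanSpace.basisFun_apply]
    rw [h1]
    exact ((EuclideanSpace.basisFun (Fin n) ℝ).orthonormal.linearIndependent).comp ci hci
  have hVfin : r ≤ Module.finrank ℝ V := by
    rw [hV, finrank_span_eq_card heind]
    simp
  --支持: x ∈ V → x j = 0 off range ci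
  have hsupp : ∀ x ∈ V, ∀ j, j ∉ Set.range ci → x j = 0 := by
    intro x hx j hj
    refine Submodule.span_induction ?_ ?_ ?_ ?_ hx
    · rintro _ ⟨l, rfl⟩
      simp only [he]
      rw [EuclideanSpace.single_apply]
      simp only [ite_eq_right_iff]
      intro hl; exact absurd ⟨l, hl.symm⟩ hj
    · rfl
    · intro u v _ _ hu hv
      show u j + v j = 0
      rw [hu, hv, add_zero]
    · intro a u _ hu
      show a * u j = 0
      rw [hu, mul_zero]
  -- quadratic form bound
  set M := Aᴴ * A with hM
  have hq : ∀ x ∈ V, (ε^2) * ‖x‖ ^ 2 ≤ (inner ℝ x (Matrix.toEuclideanLin M x) : ℝ) := by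
    intro x hx
    -- inner = ∑ i, ((A *ᵥ x) i)^2
    have hinner : (inner ℝ x (Matrix.toEuclideanLin M x) : ℝ)
        = ∑ i, ((A *ᵥ (x : Fin n → ℝ)) i)^2 := by
      rw [PiLp.inner_apply]
      have hMx : ∀ i, (Matrix.toEuclideanLin M x) i = (M *ᵥ (x : Fin n → ℝ)) i := fun i => rfl
      simp_rw [hMx]
      have : ∑ i, (x i) * (M *ᵥ (x : Fin n → ℝ)) i
          = (x : Fin n → ℝ) ⬝ᵥ (M *ᵥ (x : Fin n → ℝ)) := rfl
      simp only [RCLike.inner_apply, starRingEnd_apply, star_trivial]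
      rw [Finset.sum_congr rfl (fun i _ => mul_comm ((M *ᵥ (x : Fin n → ℝ)) i) (x i))]
      rw [this, hM, ← Matrix.mulVec_mulVec, dotProduct_mulVec,
        Matrix.conjTranspose_eq_transpose_of_trivial, Matrix.vecMul_transpose]
      simp [dotProduct, pow_two]
    set y := A *ᵥ (x : Fin n → ℝ) with hy
    set xt : Fin r → ℝ := fun l => x (ci l) with hxt
    set z := B *ᵥ xt with hz
    -- y (ri k) = z k
    have hyz : ∀ k, y (ri k) = z k := by
      intro k
      rw [hy, hz]
      show ∑ j, A (ri k) j * x j = ∑ l, B k l * xt l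
      have himg : ∑ j ∈ Finset.univ.image ci, A (ri k) j * x j
          = ∑ l, A (ri k) (ci l) * x (ci l) :=
        Finset.sum_image (fun a _ b _ hab => hci hab)
      have hrhs : (∑ l, B k l * xt l) = ∑ l, A (ri k) (ci l) * x (ci l) := rfl
      rw [hrhs, ← himg]
      refine (Finset.sum_subset (Finset.subset_univ _) ?_).symm
      intro j _ hj
      have : x j = 0 := by
        apply hsupp x hx
        intro ⟨l, hl⟩
        exact hj (Finset.mem_image.mpr ⟨l, Finset.mem_univ _, hl⟩)
      rw [this, mul_zero]
    -- ∑ z² ≤ ∑ y²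
    have hzy : ∑ k, (z k)^2 ≤ ∑ i, (y i)^2 := by
      have himg2 : ∑ i ∈ Finset.univ.image ri, (y i)^2 = ∑ k, (y (ri k))^2 :=
        Finset.sum_image (fun a _ b _ hab => hri hab)
      calc ∑ k, (z k)^2 = ∑ k, (y (ri k))^2 := by
            refine Finset.sum_congr rfl fun k _ => ?_
            rw [hyz k]
        _ = ∑ i ∈ Finset.univ.image ri, (y i)^2 := himg2.symm
        _ ≤ ∑ i, (y i)^2 := by
            refine Finset.sum_le_sum_of_subset_of_nonneg (Finset.subset_univ _) ?_
            intro i _ _; positivity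
    -- recover xt from z
    have hxtz : xt = B⁻¹ *ᵥ z := by
      rw [hz, Matrix.mulVec_mulVec, Matrix.nonsing_inv_mul B hA, Matrix.one_mulVec]
    set S := ∑ k, |z k| with hS
    have hS0 : 0 ≤ S := Finset.sum_nonneg fun k _ => abs_nonneg _
    have hxt_le : ∀ l, |xt l| ≤ c₀ * S := by
      intro l
      rw [hxtz]
      calc |∑ k, B⁻¹ l k * z k| ≤ ∑ k, |B⁻¹ l k * z k| := Finset.abs_sum_le_sum_abs _ _
        _ ≤ ∑ k, c₀ * |z k| := by
            refine Finset.sum_le_sum fun k _ => ?_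
            rw [abs_mul]
            exact mul_le_mul_of_nonneg_right (abs_le_cnorm _ _ _) (abs_nonneg _)
        _ = c₀ * S := by rw [hS, Finset.mul_sum]
    have hS2 : S^2 ≤ (r:ℝ) * ∑ k, (z k)^2 := by
      have hcs := sq_sum_le_card_mul_sum_sq (s := (Finset.univ : Finset (Fin r)))
        (f := fun k => |z k|)
      simpa [sq_abs] using hcs
    have hnormx : ‖x‖^2 = ∑ l, (xt l)^2 := by
      have h1 : ‖x‖^2 = ∑ j, (x j)^2 := by
        rw [EuclideanSpace.norm_eq, Real.sq_sqrt (by positivity)]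
        refine Finset.sum_congr rfl fun j _ => ?_
        rw [Real.norm_eq_abs, sq_abs]
      rw [h1]
      have himg3 : ∑ j ∈ Finset.univ.image ci, (x j)^2 = ∑ l, (x (ci l))^2 :=
        Finset.sum_image (fun a _ b _ hab => hci hab)
      have : ∑ l, (xt l)^2 = ∑ l, (x (ci l))^2 := rfl
      rw [this, ← himg3]
      refine (Finset.sum_subset (Finset.subset_univ _) ?_).symm
      intro j _ hj
      have hx0 : x j = 0 := by
        apply hsupp x hx
        intro ⟨l, hl⟩
        exact hj (Finset.mem_image.mpr ⟨l, Finset.mem_univ _, hl⟩)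
      rw [hx0]; simp
    have hsum_xt : ∑ l, (xt l)^2 ≤ ((r:ℝ)*c₀)^2 * ∑ k, (z k)^2 := by
      have step1 : ∑ l, (xt l)^2 ≤ ∑ _l : Fin r, (c₀ * S)^2 := by
        refine Finset.sum_le_sum fun l _ => ?_
        rw [← sq_abs]
        exact pow_le_pow_left₀ (abs_nonneg _) (hxt_le l) 2
      have step2 : ∑ _l : Fin r, (c₀ * S)^2 = (r:ℝ) * (c₀^2 * S^2) := by
        rw [Finset.sum_const, Finset.card_univ, Fintype.card_fin, nsmul_eq_mul]
        ring
      have step3 : (r:ℝ) * (c₀^2 * S^2) ≤ (r:ℝ) * (c₀^2 * ((r:ℝ) * ∑ k, (z k)^2)) := by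
        have : c₀^2 * S^2 ≤ c₀^2 * ((r:ℝ) * ∑ k, (z k)^2) :=
          mul_le_mul_of_nonneg_left hS2 (by positivity)
        exact mul_le_mul_of_nonneg_left this (by positivity)
      calc ∑ l, (xt l)^2 ≤ ∑ _l : Fin r, (c₀ * S)^2 := step1
        _ = (r:ℝ) * (c₀^2 * S^2) := step2
        _ ≤ (r:ℝ) * (c₀^2 * ((r:ℝ) * ∑ k, (z k)^2)) := step3
        _ = ((r:ℝ)*c₀)^2 * ∑ k, (z k)^2 := by ring
    -- combine
    have hzsq0 : 0 ≤ ∑ k, (z k)^2 := Finset.sum_nonneg fun k _ => sq_nonneg _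
    have hεrc : ε * ((r:ℝ)*c₀) ≤ 1 := by
      calc ε * ((r:ℝ)*c₀) ≤ ε * (1/ε) := by
            exact mul_le_mul_of_nonneg_left hrc hε.le
        _ = 1 := by field_simp
    have hεrc0 : 0 ≤ ε * ((r:ℝ)*c₀) := by positivity
    have key : ε^2 * (((r:ℝ)*c₀)^2 * ∑ k, (z k)^2) ≤ ∑ k, (z k)^2 := by
      have h1 : (ε * ((r:ℝ)*c₀))^2 ≤ 1 := by nlinarith
      calc ε^2 * (((r:ℝ)*c₀)^2 * ∑ k, (z k)^2) = (ε * ((r:ℝ)*c₀))^2 * ∑ k, (z k)^2 := by ring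
        _ ≤ 1 * ∑ k, (z k)^2 := mul_le_mul_of_nonneg_right h1 hzsq0
        _ = ∑ k, (z k)^2 := one_mul _
    rw [hinner, hnormx]
    calc ε^2 * ∑ l, (xt l)^2 ≤ ε^2 * (((r:ℝ)*c₀)^2 * ∑ k, (z k)^2) := by
          exact mul_le_mul_of_nonneg_left hsum_xt (by positivity)
      _ ≤ ∑ k, (z k)^2 := key
      _ ≤ ∑ i, (y i)^2 := hzy
  -- conclude via eigenvalue counting
  have hH : (Aᵀ * A).IsHermitian := by
    simpa [Matrix.conjTranspose_eq_transpose_of_trivial] using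
      Matrix.isHermitian_conjTranspose_mul_self A
  have hcard := card_eig_ge hH (ε^2) V hVfin hq
  have hkth := kthLargest_ge hH.eigenvalues r (ε^2)
    hr0 hcard
  rw [singularValue, ge_iff_le, show ε = Real.sqrt (ε^2) from (Real.sqrt_sq hε.le).symm]
  exact Real.sqrt_le_sqrt hkth
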